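/- If U and M are symmetric positive definite matrices with U − M positive semidefinite, and Φ = (U−M)^{1/2} O U^{-1/2} for an orthogonal matrix O, then Φ is Schur-stable: every eigenvalue of Φ has modulus strictly less than 1. -/

import Mathlib

open Matrix

def SchurStable {n : ℕ} (Φ : Matrix (Fin n) (Fin n) ℝ) : Prop :=
  ∀ μ ∈ spectrum ℂ (Φ.map (algebraMap ℝ ℂ)), ‖μ‖ < 1

/-- The positive semidefinite square root of a positive semidefinite matrix
(the definition `Matrix.PosSemidef.sqrt` of the older Mathlib, since removed). -/
noncomputable def Matrix.PosSemidef.sqrt {n : Type*} [Fintype n] [DecidableEq n]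
    {A : Matrix n n ℝ} (hA : A.PosSemidef) : Matrix n n ℝ :=
  hA.1.eigenvectorUnitary.1 * diagonal ((↑) ∘ (√·) ∘ hA.1.eigenvalues) *
  (star hA.1.eigenvectorUnitary : Matrix n n ℝ)

private lemma psdSqrt_mul_self {n : Type*} [Fintype n] [DecidableEq n]
    {A : Matrix n n ℝ} (hA : A.PosSemidef) : hA.sqrt * hA.sqrt = A := by
  have hQ : (star hA.1.eigenvectorUnitary : Matrix n n ℝ) * hA.1.eigenvectorUnitary.1 = 1 :=
    Unitary.coe_star_mul_self _
  have hD : diagonal ((↑) ∘ (√·) ∘ hA.1.eigenvalues) *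
      diagonal ((↑) ∘ (√·) ∘ hA.1.eigenvalues) =
      diagonal (RCLike.ofReal ∘ hA.1.eigenvalues : n → ℝ) := by
    rw [diagonal_mul_diagonal]
    congr 1
    funext i
    simp [Real.mul_self_sqrt (hA.eigenvalues_nonneg i)]
  conv_rhs => rw [hA.1.spectral_theorem, Unitary.conjStarAlgAut_apply]
  simp only [Matrix.PosSemidef.sqrt, Matrix.mul_assoc]
  rw [← Matrix.mul_assoc (star _ : Matrix n n ℝ), hQ, Matrix.one_mul,
    ← Matrix.mul_assoc (diagonal _), hD]

private lemma psdSqrt_transpose {n : Type*} [Fintype n] [DecidableEq n]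
    {A : Matrix n n ℝ} (hA : A.PosSemidef) : hA.sqrtᵀ = hA.sqrt := by
  rw [← conjTranspose_eq_transpose_of_trivial]
  simp only [Matrix.PosSemidef.sqrt, conjTranspose_mul, Matrix.mul_assoc]
  simp [Matrix.star_eq_conjTranspose, diagonal_conjTranspose, Matrix.mul_assoc]

private lemma re_quad_aux {n : ℕ} (M : Matrix (Fin n) (Fin n) ℝ) (v : Fin n → ℂ) :
    (star v ⬝ᵥ (M.map (algebraMap ℝ ℂ)) *ᵥ v).re =
    (fun i => (v i).re) ⬝ᵥ M *ᵥ (fun i => (v i).re) +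
    (fun i => (v i).im) ⬝ᵥ M *ᵥ (fun i => (v i).im) := by
  simp only [dotProduct, mulVec, Matrix.map_apply, Pi.star_apply, Finset.mul_sum,
    ← Finset.sum_add_distrib]
  rw [Complex.re_sum]
  refine Finset.sum_congr rfl fun i _ => ?_
  rw [Complex.re_sum]
  refine Finset.sum_congr rfl fun j _ => ?_
  simp [Complex.mul_re, Complex.mul_im]

private lemma re_quad_pos {n : ℕ} {M : Matrix (Fin n) (Fin n) ℝ} (hM : M.PosDef)
    {v : Fin n → ℂ} (hv : v ≠ 0) :
    0 < (star v ⬝ᵥ (M.map (algebraMap ℝ ℂ)) *ᵥ v).re := by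
  rw [re_quad_aux]
  have hcases : (fun i => (v i).re) ≠ 0 ∨ (fun i => (v i).im) ≠ 0 := by
    by_contra h
    push_neg at h
    apply hv
    funext i
    have h1 := congrFun h.1 i
    have h2 := congrFun h.2 i
    simp only [Pi.zero_apply] at h1 h2 ⊢
    exact Complex.ext h1 h2
  have hsd := hM.posSemidef
  rcases hcases with h | h
  · have h1 := hM.dotProduct_mulVec_pos h
    have h2 := hsd.dotProduct_mulVec_nonneg (fun i => (v i).im)
    simp only [star_trivial] at h1 h2
    linarith
  · have h1 := hM.dotProduct_mulVec_pos h
    have h2 := hsd.dotProduct_mulVec_nonneg (fun i => (v i).re)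
    simp only [star_trivial] at h1 h2
    linarith

/-- If `U, M` are symmetric positive definite with `U - M` positive semidefinite, `O`
is orthogonal and `Φ = (U - M)^{1/2} O U^{-1/2}`, then `Φ` is Schur-stable: every
eigenvalue of `Φ` has modulus strictly less than 1. -/
theorem parametrized_Phi_is_SchurStable {n : ℕ} (U M O : Matrix (Fin n) (Fin n) ℝ)
    (hU : U.PosDef) (hM : M.PosDef) (hUM : (U - M).PosSemidef)
    (hO : O * Oᵀ = 1) :
    ∀ Φ : Matrix (Fin n) (Fin n) ℝ,
      Φ = hUM.sqrt * O * (hU.inv.posSemidef.sqrt) →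
      SchurStable Φ := by
  intro Φ hΦ
  -- The key Stein identity over ℝ : Φ * U * Φᵀ = U - M
  have hkey : Φ * U * Φᵀ = U - M := by
    subst hΦ
    set S := hUM.sqrt with hS
    set T := hU.inv.posSemidef.sqrt with hT
    have hS2 : S * S = U - M := psdSqrt_mul_self hUM
    have hT2 : T * T = U⁻¹ := psdSqrt_mul_self hU.inv.posSemidef
    have hSsym : Sᵀ = S := by
      exact psdSqrt_transpose hUM
    have hTsym : Tᵀ = T := by
      exact psdSqrt_transpose hU.inv.posSemidef
    have hUdet : IsUnit U.det := (Matrix.isUnit_iff_isUnit_det U).1 hU.isUnit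
    have hTdet : IsUnit T.det := by
      have hd : T.det * T.det = U⁻¹.det := by rw [← det_mul, hT2]
      have h2 : IsUnit (U⁻¹).det := (Matrix.isUnit_iff_isUnit_det _).1 hU.inv.isUnit
      rw [← hd] at h2
      exact isUnit_of_mul_isUnit_left h2
    have hTUT : T * U * T = 1 := by
      have hU' : U = (T * T)⁻¹ := by rw [hT2, Matrix.nonsing_inv_nonsing_inv U hUdet]
      rw [hU', Matrix.mul_inv_rev, ← Matrix.mul_assoc, Matrix.mul_nonsing_inv T hTdet,
        Matrix.one_mul, Matrix.nonsing_inv_mul T hTdet]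
    calc S * O * T * U * (S * O * T)ᵀ
        = S * O * (T * U * T) * Oᵀ * S := by
          simp only [transpose_mul, hSsym, hTsym, Matrix.mul_assoc]
      _ = S * (O * Oᵀ) * S := by rw [hTUT]; simp only [Matrix.mul_assoc, Matrix.mul_one]
      _ = U - M := by rw [hO, Matrix.mul_one, hS2]
  intro μ hμ
  set f := algebraMap ℝ ℂ with hf
  set A := Φ.map f with hA
  -- the Stein identity over ℂ
  have hkeyC : A * U.map f * Aᵀ = U.map f - M.map f := by
    rw [hA, ← Matrix.transpose_map, ← Matrix.map_mul, ← Matrix.map_mul, hkey]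
    ext i j
    simp [Matrix.sub_apply]
  -- extract a left eigenvector
  obtain ⟨v, hv, hAv⟩ : ∃ v ≠ 0, Aᵀ *ᵥ v = μ • v := by
    rw [spectrum.mem_iff] at hμ
    rw [Matrix.isUnit_iff_isUnit_det, isUnit_iff_ne_zero, not_not] at hμ
    have h2 : ((algebraMap ℂ (Matrix (Fin n) (Fin n) ℂ)) μ - A)ᵀ.det = 0 := by
      rw [det_transpose]; exact hμ
    obtain ⟨v, hv, hv2⟩ := (Matrix.exists_mulVec_eq_zero_iff).2 h2
    refine ⟨v, hv, ?_⟩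
    rw [transpose_sub, sub_mulVec, sub_eq_zero] at hv2
    rw [← hv2]
    simp [Algebra.algebraMap_eq_smul_one, smul_mulVec]
  -- conjugate-transpose of A is its transpose (real entries)
  have hAH : Aᴴ = Aᵀ := by
    ext i j
    simp [hA, hf, conjTranspose_apply, Complex.conj_ofReal]
  have hvecMul : star v ᵥ* A = star μ • star v := by
    have h1 : star (Aᴴ *ᵥ v) = star v ᵥ* A := by
      rw [star_mulVec, conjTranspose_conjTranspose]
    rw [← h1, hAH, hAv, star_smul]
  -- the quadratic forms
  set u : ℂ := star v ⬝ᵥ (U.map f) *ᵥ v with hu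
  set m : ℂ := star v ⬝ᵥ (M.map f) *ᵥ v with hm
  have hquad : (starRingEnd ℂ) μ * μ * u = u - m := by
    have h1 : star v ⬝ᵥ (A * U.map f * Aᵀ) *ᵥ v = (starRingEnd ℂ) μ * μ * u := by
      rw [← Matrix.mulVec_mulVec, ← Matrix.mulVec_mulVec, hAv, Matrix.mulVec_smul,
        Matrix.mulVec_smul, dotProduct_smul, Matrix.dotProduct_mulVec, hvecMul,
        smul_dotProduct, ← hu]
      simp only [smul_eq_mul, RCLike.star_def]
      ring
    rw [← h1, hkeyC, Matrix.sub_mulVec, dotProduct_sub]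
  -- take real parts
  have hur : 0 < u.re := re_quad_pos hU hv
  have hmr : 0 < m.re := re_quad_pos hM hv
  have hre : ‖μ‖ ^ 2 * u.re = u.re - m.re := by
    have h2 : ((‖μ‖ : ℂ) ^ 2) * u = u - m := by
      rw [← hquad]
      congr 1
      rw [← Complex.mul_conj']
      ring
    have := congrArg Complex.re h2
    simpa [Complex.mul_re, ← Complex.ofReal_pow] using this
  have hn : 0 ≤ ‖μ‖ := norm_nonneg μ
  nlinarith [sq_nonneg (‖μ‖ - 1), sq_nonneg (‖μ‖ + 1)]
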